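/- Let L₀, …, L_{n−1} (indices mod n) be lines in ℍ² with Lᵢ ⊕ L_{i+1} = ℍ² for all i, and let n ≥ 3 be odd. Then the ℍ-linear endomorphism A = Q_{n−1} ∘ Q_{n−3} ∘ ⋯ ∘ Q₂ ∘ Q₀ of ℍ² satisfies: A vanishes on L₀, the image of A is contained in L₀, A restricted to L₁ is injective (so A ≠ 0), and A ∘ A = 0; in particular A is a nonzero nilpotent endomorphism. (This endomorphism is the leading coefficient H_max of the polynomial holonomy H(λ) of a closed polygon of odd length; its nilpotency is established in the proof of Theorem 6.1 on the spectral curve of a closed polygon in S⁴.) -/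

import Mathlib

noncomputable section

/-- The quaternions. -/
abbrev H : Type := Quaternion ℝ

/-- `ℍ²`, pairs of quaternions, regarded as a right `ℍ`-module
(i.e. a module over the opposite ring `ℍᵐᵒᵖ`). -/
abbrev H2 : Type := Fin 2 → H

/-- A line in `ℍ²`: a one-dimensional right `ℍ`-submodule. -/
def IsLine (L : Submodule Hᵐᵒᵖ H2) : Prop :=
  ∃ v : H2, v ≠ 0 ∧ L = Submodule.span Hᵐᵒᵖ {v}

/-- `Q_{n-1} ∘ Q_{n-3} ∘ ⋯ ∘ Q₂ ∘ Q₀` (for `n` odd): the composition of the projections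
`Q` at the even indices `0, 2, …, n-1`. -/
def Hmax (n : ℕ) (Q : ZMod n → (H2 →ₗ[Hᵐᵒᵖ] H2)) : H2 →ₗ[Hᵐᵒᵖ] H2 :=
  (List.range ((n + 1) / 2)).foldl (fun A k => Q ((2 * k : ℕ) : ZMod n) ∘ₗ A) LinearMap.id

/-- Partial composition `Q_{2(k-1)} ∘ ⋯ ∘ Q₂ ∘ Q₀`. -/
def Apart (n : ℕ) (Q : ZMod n → (H2 →ₗ[Hᵐᵒᵖ] H2)) (k : ℕ) : H2 →ₗ[Hᵐᵒᵖ] H2 :=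
  (List.range k).foldl (fun A j => Q ((2 * j : ℕ) : ZMod n) ∘ₗ A) LinearMap.id

lemma Apart_succ (n : ℕ) (Q : ZMod n → (H2 →ₗ[Hᵐᵒᵖ] H2)) (k : ℕ) :
    Apart n Q (k + 1) = Q ((2 * k : ℕ) : ZMod n) ∘ₗ Apart n Q k := by
  simp [Apart, List.range_succ]

/-- The leading coefficient `H_max = Q_{n-1} ∘ ⋯ ∘ Q₂ ∘ Q₀` of the polynomial holonomy
of a closed polygon of odd length vanishes on `L₀`, has image in `L₀`, is injective on
`L₁` (hence nonzero), and squares to zero; in particular it is a nonzero nilpotent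
endomorphism (proof of Theorem 6.1). -/
theorem Hmax_nilpotent_of_odd
    (n : ℕ) (hn : 3 ≤ n) (hodd : Odd n)
    (L : ZMod n → Submodule Hᵐᵒᵖ H2)
    (hline : ∀ i, IsLine (L i))
    (hcompl : ∀ i, IsCompl (L i) (L (i + 1)))
    (P Q : ZMod n → (H2 →ₗ[Hᵐᵒᵖ] H2))
    (hP : ∀ i v, P i v ∈ L i) (hQ : ∀ i v, Q i v ∈ L (i + 1))
    (hPQ : ∀ i v, P i v + Q i v = v) :
    (∀ v ∈ L 0, Hmax n Q v = 0) ∧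
    (∀ v : H2, Hmax n Q v ∈ L 0) ∧
    Set.InjOn (Hmax n Q) (L 1 : Set H2) ∧
    Hmax n Q ≠ 0 ∧
    Hmax n Q ∘ₗ Hmax n Q = 0 := by
  -- disjointness of consecutive lines
  have hdisj : ∀ i : ZMod n, ∀ v : H2, v ∈ L i → v ∈ L (i + 1) → v = 0 := by
    intro i v h1 h2
    exact Submodule.disjoint_def.1 (hcompl i).disjoint v h1 h2
  -- Q i kills L i
  have hQker : ∀ i : ZMod n, ∀ v ∈ L i, Q i v = 0 := by
    intro i v hv
    have h1 : Q i v = v - P i v := by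
      have := hPQ i v; linear_combination (norm := module) this
    have h2 : Q i v ∈ L i := by
      rw [h1]; exact Submodule.sub_mem _ hv (hP i v)
    exact hdisj i _ h2 (hQ i v)
  -- kernel of Q i is contained in L i
  have hQker' : ∀ i : ZMod n, ∀ v : H2, Q i v = 0 → v ∈ L i := by
    intro i v hv
    have := hPQ i v
    rw [hv, add_zero] at this
    rw [← this]; exact hP i v
  -- the main induction along the chain
  have key : ∀ k : ℕ,
      (∀ v : H2, Apart n Q (k + 1) v ∈ L ((2 * k + 1 : ℕ) : ZMod n)) ∧
      (∀ v ∈ L 1, Apart n Q (k + 1) v = 0 → v = 0) := by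
    intro k
    induction k with
    | zero =>
      constructor
      · intro v
        rw [Apart_succ]
        simpa [Apart] using hQ 0 v
      · intro v hv h
        rw [Apart_succ] at h
        simp only [Nat.cast_zero, mul_zero] at h
        have hv0 : v ∈ L (0 : ZMod n) := hQker' 0 v (by simpa [Apart] using h)
        exact hdisj 0 v hv0 (by simpa using hv)
    | succ k ih =>
      have hcast1 : ((2 * k + 1 : ℕ) : ZMod n) + 1 = ((2 * (k + 1) : ℕ) : ZMod n) := by
        push_cast; ring
      have hcast2 : ((2 * (k + 1) : ℕ) : ZMod n) + 1 = ((2 * (k + 1) + 1 : ℕ) : ZMod n) := by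
        push_cast; ring
      constructor
      · intro v
        rw [Apart_succ, LinearMap.comp_apply, ← hcast2]
        exact hQ _ _
      · intro v hv h
        rw [Apart_succ, LinearMap.comp_apply] at h
        have h1 : Apart n Q (k + 1) v ∈ L ((2 * (k + 1) : ℕ) : ZMod n) :=
          hQker' _ _ h
        have h2 : Apart n Q (k + 1) v ∈ L ((2 * k + 1 : ℕ) : ZMod n) := (ih.1) v
        have h3 : Apart n Q (k + 1) v = 0 := by
          apply hdisj ((2 * k + 1 : ℕ) : ZMod n) _ h2
          rwa [hcast1]
        exact ih.2 v hv h3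
  -- Apart (k+1) kills L 0
  have kills : ∀ k : ℕ, ∀ v ∈ L (0 : ZMod n), Apart n Q (k + 1) v = 0 := by
    intro k
    induction k with
    | zero =>
      intro v hv
      rw [Apart_succ]
      simpa [Apart] using hQker 0 v hv
    | succ k ih =>
      intro v hv
      rw [Apart_succ, LinearMap.comp_apply, ih v hv, map_zero]
  -- arithmetic: (n+1)/2 = m, n = 2(m-1)+1
  have hn2 : n % 2 = 1 := Nat.odd_iff.1 hodd
  have hm : (n + 1) / 2 = (n - 1) / 2 + 1 := by omega
  have hnn : 2 * ((n - 1) / 2) + 1 = n := by omega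
  have hHmax : Hmax n Q = Apart n Q ((n - 1) / 2 + 1) := by
    rw [← hm]; rfl
  have himg : ∀ v : H2, Hmax n Q v ∈ L 0 := by
    intro v
    have := (key ((n - 1) / 2)).1 v
    rw [hnn] at this
    rw [hHmax]
    simpa [ZMod.natCast_self] using this
  have hkill : ∀ v ∈ L 0, Hmax n Q v = 0 := by
    intro v hv
    rw [hHmax]
    exact kills _ v hv
  have hinj : ∀ v ∈ L 1, Hmax n Q v = 0 → v = 0 := by
    intro v hv h
    rw [hHmax] at h
    exact (key ((n - 1) / 2)).2 v hv h
  refine ⟨hkill, himg, ?_, ?_, ?_⟩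
  · intro u hu v hv huv
    have h1 : Hmax n Q (u - v) = 0 := by
      rw [map_sub, huv, sub_self]
    have h2 : u - v ∈ L 1 := Submodule.sub_mem _ hu hv
    have := hinj _ h2 h1
    exact sub_eq_zero.1 this
  · obtain ⟨w, hw0, hwspan⟩ := hline 1
    have hw : w ∈ L 1 := by rw [hwspan]; exact Submodule.mem_span_singleton_self w
    intro h
    apply hw0
    apply hinj w hw
    rw [h]; rfl
  · refine LinearMap.ext fun v => ?_
    simp only [LinearMap.comp_apply, LinearMap.zero_apply]
    exact hkill _ (himg v)
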